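/- Let T={0}∪{1/n : n∈ℕ} be the convergent-sequence semilattice with xy=x if x=y and xy=0 otherwise, H a two-element group with identity e and non-identity h, and S=T×H with the topology inducing the usual compact topology on T×{e} and the discrete topology on T×{h}. Then S is a topological inverse semigroup whose canonical left unit operation λ:x↦xx⁻¹ is not dicontinuous at the point (0,h). -/

import Mathlib

open Topology

/-- Dicontinuity of a left unit operation `l` at `x`:
for every neighborhood `O` of `x` there are a neighborhood `U` of `x` and a
neighborhood `W` of `l x` in the subspace `l(S)` such that
`(W ⟍ U) ∩ l⁻¹(W) ⊆ O`, where `W ⟍ U = {z | ∃ w ∈ W, w * z ∈ U}`. -/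
def LeftDicontAt {S : Type*} [TopologicalSpace S] (mul : S → S → S) (l : S → S) (x : S) : Prop :=
  ∀ O ∈ 𝓝 x, ∃ U ∈ 𝓝 x, ∃ W ∈ 𝓝[Set.range l] (l x),
    W ⊆ Set.range l ∧ {z | l z ∈ W ∧ ∃ w ∈ W, mul w z ∈ U} ⊆ O

/-- Dicontinuity of a right unit operation `r` at `x`. -/
def RightDicontAt {S : Type*} [TopologicalSpace S] (mul : S → S → S) (r : S → S) (x : S) : Prop :=
  ∀ O ∈ 𝓝 x, ∃ U ∈ 𝓝 x, ∃ W ∈ 𝓝[Set.range r] (r x),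
    W ⊆ Set.range r ∧ {z | r z ∈ W ∧ ∃ w ∈ W, mul z w ∈ U} ⊆ O

/-- The convergent sequence `{0} ∪ {1/(n+1) : n ∈ ℕ}` in `ℝ`. -/
def Tset : Set ℝ := {0} ∪ {x : ℝ | ∃ n : ℕ, x = 1 / (n + 1)}

/-- The semilattice operation on `T`: `x * y = x` if `x = y`, and `0` otherwise. -/
noncomputable def tMul (x y : ↥Tset) : ↥Tset :=
  open Classical in if x = y then x else ⟨0, Or.inl rfl⟩

/-- Multiplication of `S = T × H`, where `H` is the two-element group `Bool` (with `xor`). -/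
noncomputable def sMul (p q : ↥Tset × Bool) : ↥Tset × Bool :=
  (tMul p.1 q.1, xor p.2 q.2)

/-- The inversion of `S = T × H` (every element of `H = Bool` is its own inverse). -/
def sInv (p : ↥Tset × Bool) : ↥Tset × Bool := p

/-- The canonical left unit operation `λ : x ↦ x·x⁻¹` on `S`, i.e. `(t,g) ↦ (t,e)`. -/
noncomputable def sLambda (p : ↥Tset × Bool) : ↥Tset × Bool := sMul p (sInv p)

/-- The topology on `S = T × H` inducing the original compact topology on `T × {e}`
and the discrete topology on `T × {h}` (where `e = false`, `h = true`). -/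
def sTop : TopologicalSpace (↥Tset × Bool) :=
  TopologicalSpace.coinduced (fun t : ↥Tset => (t, false)) inferInstance

section Helper
open Filter




def z0 : ↥Tset := ⟨0, Or.inl rfl⟩

lemma tMul_self (x : ↥Tset) : tMul x x = x := if_pos rfl

lemma tMul_ne {x y : ↥Tset} (h : x ≠ y) : tMul x y = z0 := if_neg h

lemma tMul_zero_right (x : ↥Tset) : tMul x z0 = z0 := by
  by_cases h : x = z0
  · rw [h, tMul_self]
  · exact tMul_ne h

lemma tMul_zero_left (x : ↥Tset) : tMul z0 x = z0 := by
  by_cases h : z0 = x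
  · rw [← h, tMul_self]
  · exact tMul_ne h

lemma tMul_comm (x y : ↥Tset) : tMul x y = tMul y x := by
  by_cases h : x = y
  · rw [h]
  · rw [tMul_ne h, tMul_ne (Ne.symm h)]

lemma tMul_assoc (x y z : ↥Tset) : tMul (tMul x y) z = tMul x (tMul y z) := by
  by_cases hxy : x = y
  · subst hxy
    rw [tMul_self]
    by_cases hyz : x = z
    · subst hyz; exact (congrArg (tMul x) (tMul_self x)).symm
    · rw [tMul_ne hyz, tMul_zero_right]
  · rw [tMul_ne hxy, tMul_zero_left]
    by_cases hyz : y = z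
    · subst hyz; rw [tMul_self, tMul_ne hxy]
    · rw [tMul_ne hyz, tMul_zero_right]

lemma isOpen_sTop {U : Set (↥Tset × Bool)} :
    @IsOpen _ sTop U ↔ IsOpen {t : ↥Tset | (t, false) ∈ U} :=
  Iff.rfl

lemma mem_Tset (n : ℕ) : (1 / (n + 1) : ℝ) ∈ Tset := Or.inr ⟨n, rfl⟩

lemma isolated {t : ↥Tset} (ht : (t : ℝ) ≠ 0) : IsOpen ({t} : Set ↥Tset) := by
  obtain ⟨n, hn⟩ : ∃ n : ℕ, (t : ℝ) = 1 / (n + 1) := t.2.resolve_left ht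
  have hb : (0:ℝ) < (n:ℝ) + 1 := by positivity
  have hb2 : (0:ℝ) < (n:ℝ) + 2 := by positivity
  have hball : (Subtype.val ⁻¹' Metric.ball (t : ℝ) (1 / (((n:ℝ)+1)*((n:ℝ)+2)))) = {t} := by
    ext ⟨x, hx⟩
    simp only [Set.mem_preimage, Metric.mem_ball, Set.mem_singleton_iff, Subtype.ext_iff,
      Real.dist_eq]
    constructor
    · intro hd
      rcases hx with hx0 | ⟨m, hm⟩
      · exfalso
        simp only [Set.mem_singleton_iff] at hx0
        rw [hx0, hn, zero_sub, abs_neg, abs_of_pos (by positivity),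
          div_lt_div_iff₀ hb (by positivity)] at hd
        nlinarith
      · rw [hm, hn] at hd ⊢
        by_cases hmn : m = n
        · rw [hmn]
        · exfalso
          have hm1 : (0:ℝ) < (m:ℝ) + 1 := by positivity
          have key : (1:ℝ)/(m+1) - 1/(n+1) = ((n:ℝ) - m)/(((m:ℝ)+1)*((n:ℝ)+1)) := by
            field_simp
            ring
          rw [key] at hd
          rcases lt_or_gt_of_ne hmn with hlt | hgt
          · have h1 : (m:ℝ) + 1 ≤ (n:ℝ) := by exact_mod_cast Nat.succ_le_of_lt hlt
            rw [abs_of_pos (by apply div_pos (by linarith) (by positivity)),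
              div_lt_div_iff₀ (by positivity) (by positivity)] at hd
            nlinarith [mul_le_mul_of_nonneg_right h1 hb.le, hb, hb2,
              mul_pos hb hb2]
          · have h1 : (n:ℝ) + 1 ≤ (m:ℝ) := by exact_mod_cast Nat.succ_le_of_lt hgt
            rw [abs_of_neg (by apply div_neg_of_neg_of_pos (by linarith) (by positivity)),
              ← neg_div, div_lt_div_iff₀ (by positivity) (by positivity)] at hd
            nlinarith [mul_le_mul_of_nonneg_right h1 hb.le, hb, hb2, hm1,
              mul_pos hb hb2]
    · intro h; rw [h]; simpa using by positivity
  rw [← hball]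
  exact Metric.isOpen_ball.preimage continuous_subtype_val


lemma open_slice {A : Set ↥Tset} {b : Bool} (hA : b = true ∨ IsOpen A) :
    @IsOpen _ sTop {p : ↥Tset × Bool | p.1 ∈ A ∧ p.2 = b} := by
  rw [isOpen_sTop]
  cases b with
  | true => convert isOpen_empty using 1; ext t; simp
  | false =>
    rcases hA with h | h
    · cases h
    · convert h using 1; ext t; simp

lemma closed_compl {s : ↥Tset} : IsOpen ({t : ↥Tset | t ≠ s}) := by
  have : ({t : ↥Tset | t ≠ s}) = {s}ᶜ := rfl
  rw [this]
  exact isClosed_singleton.isOpen_compl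

lemma open_slice_snd {b : Bool} : @IsOpen _ sTop {p : ↥Tset × Bool | p.2 = b} := by
  rw [isOpen_sTop]
  cases b
  · convert isOpen_univ using 1; ext t; simp
  · convert isOpen_empty using 1; ext t; simp

lemma mul_cont :
    @Continuous ((↥Tset × Bool) × (↥Tset × Bool)) (↥Tset × Bool)
      (@instTopologicalSpaceProd _ _ sTop sTop) sTop (fun p => sMul p.1 p.2) := by
  letI : TopologicalSpace (↥Tset × Bool) := sTop
  rw [continuous_iff_continuousAt]
  rintro ⟨⟨t, g⟩, ⟨s, g'⟩⟩
  intro O hO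
  rw [Filter.mem_map]
  obtain ⟨O', hO'sub, hO'open, hO'mem⟩ := mem_nhds_iff.mp hO
  have hfx : (tMul t s, xor g g') ∈ O' := hO'mem
  clear hO'mem hO
  suffices h : ∃ U V : Set (↥Tset × Bool), IsOpen U ∧ IsOpen V ∧ (t, g) ∈ U ∧ (s, g') ∈ V ∧
      ∀ a ∈ U, ∀ b ∈ V, sMul a b ∈ O' by
    obtain ⟨U, V, hU, hV, htU, hsV, hprod⟩ := h
    filter_upwards [prod_mem_nhds (hU.mem_nhds htU) (hV.mem_nhds hsV)] with x hx
    exact hO'sub (hprod _ hx.1 _ hx.2)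
  by_cases ht : t = z0
  · by_cases hs : s = z0
    · subst ht; subst hs
      rw [tMul_self] at hfx
      cases g <;> cases g'
      · -- both false : product (z0, false)
        refine ⟨{p | p.2 = false}, {p | p.1 ∈ {u : ↥Tset | (u, false) ∈ O'} ∧ p.2 = false},
          open_slice_snd, open_slice (Or.inr hO'open), rfl, ⟨by simpa using hfx, rfl⟩, ?_⟩
        intro a ha b hb
        show (tMul a.1 b.1, xor a.2 b.2) ∈ O'
        rw [ha, hb.2]
        by_cases hab : a.1 = b.1
        · rw [hab, tMul_self]; simpa using hb.1
        · rw [tMul_ne hab]; simpa using hfx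
      · -- g = false, g' = true : product (z0, true)
        refine ⟨{p | p.2 = false}, {p | p.1 ∈ ({z0} : Set ↥Tset) ∧ p.2 = true},
          open_slice_snd, open_slice (Or.inl rfl), rfl, ⟨rfl, rfl⟩, ?_⟩
        intro a ha b hb
        show (tMul a.1 b.1, xor a.2 b.2) ∈ O'
        rw [ha, hb.2, Set.mem_singleton_iff.mp hb.1, tMul_zero_right]
        simpa using hfx
      · -- g = true, g' = false : product (z0, true)
        refine ⟨{p | p.1 ∈ ({z0} : Set ↥Tset) ∧ p.2 = true}, {p | p.2 = false},
          open_slice (Or.inl rfl), open_slice_snd, ⟨rfl, rfl⟩, rfl, ?_⟩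
        intro a ha b hb
        show (tMul a.1 b.1, xor a.2 b.2) ∈ O'
        rw [ha.2, hb, Set.mem_singleton_iff.mp ha.1, tMul_zero_left]
        simpa using hfx
      · -- both true : product (z0, false)
        refine ⟨{p | p.2 = true}, {p | p.1 ∈ {u : ↥Tset | (u, false) ∈ O'} ∧ p.2 = true},
          open_slice_snd, open_slice (Or.inl rfl), rfl, ⟨by simpa using hfx, rfl⟩, ?_⟩
        intro a ha b hb
        show (tMul a.1 b.1, xor a.2 b.2) ∈ O'
        rw [ha, hb.2]
        by_cases hab : a.1 = b.1
        · rw [hab, tMul_self]; simpa using hb.1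
        · rw [tMul_ne hab]; simpa using hfx
    · -- t = z0, s ≠ z0 : product (z0, xor g g')
      subst ht
      refine ⟨{p | p.1 ∈ {u : ↥Tset | u ≠ s} ∧ p.2 = g}, {p | p.1 ∈ ({s} : Set ↥Tset) ∧ p.2 = g'},
        open_slice (Or.inr closed_compl), open_slice ?_,
        ⟨fun h => hs h.symm, rfl⟩, ⟨Set.mem_singleton _, rfl⟩, ?_⟩
      · cases g'
        · exact Or.inr (isolated (fun h => hs (Subtype.ext h)))
        · exact Or.inl rfl
      · intro a ha b hb
        show (tMul a.1 b.1, xor a.2 b.2) ∈ O'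
        rw [ha.2, hb.2, Set.mem_singleton_iff.mp hb.1, tMul_ne ha.1]
        rwa [tMul_zero_left] at hfx
  · by_cases hst : s = t
    · refine ⟨{p | p.1 ∈ ({t} : Set ↥Tset) ∧ p.2 = g}, {p | p.1 ∈ ({s} : Set ↥Tset) ∧ p.2 = g'},
        open_slice ?_, open_slice ?_, ⟨Set.mem_singleton _, rfl⟩, ⟨Set.mem_singleton _, rfl⟩, ?_⟩
      · cases g
        · exact Or.inr (isolated (fun h => ht (Subtype.ext h)))
        · exact Or.inl rfl
      · cases g'
        · exact Or.inr (isolated (fun h => ht (by rw [← hst]; exact Subtype.ext h)))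
        · exact Or.inl rfl
      · intro a ha b hb
        show (tMul a.1 b.1, xor a.2 b.2) ∈ O'
        rw [ha.2, hb.2, Set.mem_singleton_iff.mp ha.1, Set.mem_singleton_iff.mp hb.1]
        exact hfx
    · refine ⟨{p | p.1 ∈ ({t} : Set ↥Tset) ∧ p.2 = g}, {p | p.1 ∈ {u : ↥Tset | u ≠ t} ∧ p.2 = g'},
        open_slice ?_, open_slice (Or.inr closed_compl),
        ⟨Set.mem_singleton _, rfl⟩, ⟨hst, rfl⟩, ?_⟩
      · cases g
        · exact Or.inr (isolated (fun h => ht (Subtype.ext h)))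
        · exact Or.inl rfl
      · intro a ha b hb
        show (tMul a.1 b.1, xor a.2 b.2) ∈ O'
        rw [ha.2, hb.2, Set.mem_singleton_iff.mp ha.1,
          tMul_ne (fun h : t = b.1 => hb.1 h.symm)]
        rwa [tMul_ne (fun h : t = s => hst h.symm)] at hfx




lemma sLambda_eq (p : ↥Tset × Bool) : sLambda p = (p.1, false) := by
  show (tMul p.1 p.1, xor p.2 p.2) = (p.1, false)
  rw [tMul_self, Bool.xor_self]

lemma not_dicont :
    ¬ @LeftDicontAt (↥Tset × Bool) sTop sMul sLambda ((⟨0, Or.inl rfl⟩ : ↥Tset), true) := by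
  letI : TopologicalSpace (↥Tset × Bool) := sTop
  intro H
  set x : ↥Tset × Bool := ((⟨0, Or.inl rfl⟩ : ↥Tset), true) with hx
  have hxz : x = (z0, true) := rfl
  have hxopen : IsOpen ({x} : Set (↥Tset × Bool)) := by
    have : ({x} : Set (↥Tset × Bool)) = {p | p.1 ∈ ({z0} : Set ↥Tset) ∧ p.2 = true} := by
      ext p
      rw [Set.mem_singleton_iff, hxz, Prod.ext_iff]
      exact Iff.rfl
    rw [this]
    exact open_slice (Or.inl rfl)
  obtain ⟨U, hU, W, hW, hWsub, hsub⟩ := H {x} (hxopen.mem_nhds rfl)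
  have hLx : sLambda x = (z0, false) := sLambda_eq x
  rw [hLx] at hW
  obtain ⟨V, hVopen, hVmem, hVsub⟩ := mem_nhdsWithin.mp hW
  -- the sequence (1/(n+1), false) converges to (z0, false)
  have hseq : Filter.Tendsto (fun n : ℕ => ((⟨1/(n+1), mem_Tset n⟩ : ↥Tset), false))
      Filter.atTop (𝓝 (z0, false)) := by
    have h1 : Filter.Tendsto (fun n : ℕ => ((1:ℝ)/(n+1))) Filter.atTop (𝓝 0) :=
      tendsto_one_div_add_atTop_nhds_zero_nat
    have h2 : Filter.Tendsto (fun n : ℕ => (⟨1/(n+1), mem_Tset n⟩ : ↥Tset))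
        Filter.atTop (𝓝 z0) := by
      rw [tendsto_subtype_rng]
      exact h1
    have hj : Continuous (fun t : ↥Tset => ((t, false) : ↥Tset × Bool)) :=
      continuous_coinduced_rng
    exact (hj.tendsto z0).comp h2
  obtain ⟨n, hn⟩ := (hseq.eventually (hVopen.mem_nhds hVmem)).exists
  set tn : ↥Tset := ⟨1/(n+1), mem_Tset n⟩ with htn
  have htn_range : ((tn, false) : ↥Tset × Bool) ∈ Set.range sLambda :=
    ⟨(tn, false), sLambda_eq _⟩
  have htnW : ((tn, false) : ↥Tset × Bool) ∈ W := hVsub ⟨hn, htn_range⟩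
  have hz0W : ((z0, false) : ↥Tset × Bool) ∈ W :=
    hVsub ⟨hVmem, ⟨(z0, false), sLambda_eq _⟩⟩
  have hzmem : ((tn, true) : ↥Tset × Bool) ∈ {z | sLambda z ∈ W ∧ ∃ w ∈ W, sMul w z ∈ U} := by
    refine ⟨by rw [sLambda_eq]; exact htnW, (z0, false), hz0W, ?_⟩
    have : sMul (z0, false) (tn, true) = x := by
      rw [hxz]
      show (tMul z0 tn, xor false true) = (z0, true)
      rw [tMul_zero_left]
      rfl
    rw [this]
    exact mem_of_mem_nhds hU
  have := hsub hzmem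
  rw [Set.mem_singleton_iff, hxz, Prod.ext_iff] at this
  have h0 : (tn : ℝ) = 0 := congrArg Subtype.val this.1
  have : (0:ℝ) < (n:ℝ) + 1 := by positivity
  rw [htn] at h0
  simp only at h0
  exact absurd h0 (by positivity)

end Helper

/-- The semigroup `S = T × H` with the above topology is a (commutative) topological
inverse semigroup, but its canonical left unit operation `λ : x ↦ x·x⁻¹` is not
dicontinuous at the point `(0, h)`. -/
theorem convergent_sequence_example_not_ditopological :
    (∀ p q r : ↥Tset × Bool, sMul (sMul p q) r = sMul p (sMul q r)) ∧
    (∀ p q : ↥Tset × Bool, sMul p q = sMul q p) ∧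
    (∀ p : ↥Tset × Bool, sMul (sMul p (sInv p)) p = p) ∧
    (∀ p : ↥Tset × Bool, sMul (sMul (sInv p) p) (sInv p) = sInv p) ∧
    (@Continuous ((↥Tset × Bool) × (↥Tset × Bool)) (↥Tset × Bool)
      (@instTopologicalSpaceProd _ _ sTop sTop) sTop (fun p => sMul p.1 p.2)) ∧
    (@Continuous (↥Tset × Bool) (↥Tset × Bool) sTop sTop sInv) ∧
    ¬ @LeftDicontAt (↥Tset × Bool) sTop sMul sLambda ((⟨0, Or.inl rfl⟩ : ↥Tset), true) := by
  refine ⟨?_, ?_, ?_, ?_, mul_cont, ?_, not_dicont⟩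
  · intro p q r
    show (tMul (tMul p.1 q.1) r.1, xor (xor p.2 q.2) r.2)
       = (tMul p.1 (tMul q.1 r.1), xor p.2 (xor q.2 r.2))
    rw [tMul_assoc, Bool.xor_assoc]
  · intro p q
    show (tMul p.1 q.1, xor p.2 q.2) = (tMul q.1 p.1, xor q.2 p.2)
    rw [tMul_comm p.1 q.1, Bool.xor_comm]
  · intro p
    show (tMul (tMul p.1 p.1) p.1, xor (xor p.2 p.2) p.2) = p
    rw [tMul_self, tMul_self, Bool.xor_self, Bool.false_xor]
  · intro p
    show (tMul (tMul p.1 p.1) p.1, xor (xor p.2 p.2) p.2) = p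
    rw [tMul_self, tMul_self, Bool.xor_self, Bool.false_xor]
  · exact @continuous_id _ sTop
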